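/- Let n ≥ 1 be an integer, ε ∈ [0, 1/2), and M ≥ 2 a real number. Then the infimum of λ over all real λ > 0 for which there exists a density matrix ω on ℂ^{2^n} with T(ω, |1⟩⟨1|^{⊗n}) ≤ ε and λ·π_M^{⊗n} − ω positive semidefinite, equals (1−ε)·M^n, and this infimum is attained. -/

import Mathlib

open Matrix ComplexOrder

/-- Trace norm of a complex matrix: the trace of `sqrt(AᴴA)` (sum of singular values). -/
noncomputable def traceNorm {n : Type*} [Fintype n] [DecidableEq n]
    (A : Matrix n n ℂ) : ℝ :=
  (((Matrix.posSemidef_conjTranspose_mul_self A).1.eigenvectorUnitary : Matrix n n ℂ) *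
    diagonal ((RCLike.ofReal : ℝ → ℂ) ∘ (√·) ∘ (Matrix.posSemidef_conjTranspose_mul_self A).1.eigenvalues) *
    (star (Matrix.posSemidef_conjTranspose_mul_self A).1.eigenvectorUnitary : Matrix n n ℂ)).trace.re

/-- Trace distance `T(X,Y) = ‖X - Y‖₁ / 2`. -/
noncomputable def traceDist {n : Type*} [Fintype n] [DecidableEq n]
    (X Y : Matrix n n ℂ) : ℝ :=
  traceNorm (X - Y) / 2

/-- A density matrix: positive semidefinite with unit trace. -/
def IsDensityMatrix {n : Type*} [Fintype n] (ρ : Matrix n n ℂ) : Prop :=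
  ρ.PosSemidef ∧ ρ.trace = 1

/-- The battery Gibbs state `π_M = diag(1 - 1/M, 1/M)`. -/
noncomputable def piM (M : ℝ) : Matrix (Fin 2) (Fin 2) ℂ :=
  Matrix.diagonal ![((1 - 1/M : ℝ) : ℂ), ((1/M : ℝ) : ℂ)]

/-- The excited battery state `|1⟩⟨1| = diag(0,1)`. -/
def ket1 : Matrix (Fin 2) (Fin 2) ℂ :=
  Matrix.diagonal ![0, 1]

/-- A test (POVM effect): `0 ≤ E ≤ I`. -/
def IsTest {n : Type*} [Fintype n] [DecidableEq n] (E : Matrix n n ℂ) : Prop :=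
  E.PosSemidef ∧ (1 - E).PosSemidef

/-- Choi matrix `Σ_{ij} E_{ij} ⊗ F(E_{ij})` of a linear map on matrices. -/
noncomputable def choiMatrix {n m : Type*} [Fintype n] [DecidableEq n] [Fintype m]
    (F : Matrix n n ℂ →ₗ[ℂ] Matrix m m ℂ) :
    Matrix (n × m) (n × m) ℂ :=
  fun p q => F (Matrix.single p.1 q.1 1) p.2 q.2

/-- Completely positive (positive semidefinite Choi matrix) and trace preserving. -/
def IsCPTP {n m : Type*} [Fintype n] [DecidableEq n] [Fintype m]
    (F : Matrix n n ℂ →ₗ[ℂ] Matrix m m ℂ) : Prop :=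
  (choiMatrix F).PosSemidef ∧ ∀ X, (F X).trace = X.trace

/-- `n`-fold Kronecker (tensor) power of a `2 × 2` matrix, indexed by bit strings. -/
def tensPow (A : Matrix (Fin 2) (Fin 2) ℂ) (n : ℕ) :
    Matrix (Fin n → Fin 2) (Fin n → Fin 2) ℂ :=
  fun x y => ∏ i, A (x i) (y i)

/-- `ε`-ball (in trace distance) of density matrices around a set `𝓟`. -/
noncomputable def metBall {n : Type*} [Fintype n] [DecidableEq n]
    (ε : ℝ) (P : Set (Matrix n n ℂ)) : Set (Matrix n n ℂ) :=
  {ω | IsDensityMatrix ω ∧ ∃ ρ ∈ P, traceDist ω ρ ≤ ε}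

set_option maxHeartbeats 1000000

-- helper lemmas

/-- square root of a positive semidefinite matrix, via the spectral theorem. -/
noncomputable def Matrix.PosSemidef.sqrt {ι : Type*} [Fintype ι] [DecidableEq ι]
    {A : Matrix ι ι ℂ} (hA : A.PosSemidef) : Matrix ι ι ℂ :=
  (hA.1.eigenvectorUnitary : Matrix ι ι ℂ) *
    diagonal ((RCLike.ofReal : ℝ → ℂ) ∘ (√·) ∘ hA.1.eigenvalues) *
    (star hA.1.eigenvectorUnitary : Matrix ι ι ℂ)

lemma traceNorm_eq {ι : Type*} [Fintype ι] [DecidableEq ι] (A : Matrix ι ι ℂ) :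
    traceNorm A = ((Matrix.posSemidef_conjTranspose_mul_self A).sqrt.trace).re := rfl

lemma Matrix.PosSemidef.eq_sqrt_of_sq_eq {ι : Type*} [Fintype ι] [DecidableEq ι]
    {A B : Matrix ι ι ℂ} (hB : B.PosSemidef) (hA : A.PosSemidef) (h : B ^ 2 = A) :
    B = hA.sqrt := by
  have h1 : hA.sqrt = cfc Real.sqrt A := by
    rw [hA.1.cfc_eq, Matrix.IsHermitian.cfc, Unitary.conjStarAlgAut_apply]; rfl
  rw [h1, ← h]
  have hBsa : IsSelfAdjoint B := hB.1
  rw [← cfc_pow_id (R := ℝ) B 2 hBsa, ← cfc_comp Real.sqrt (fun x => x ^ 2) B]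
  symm
  rw [cfc_congr (g := fun x : ℝ => x) ?_]
  · exact cfc_id' ℝ B hBsa
  intro x hx
  have hx0 : 0 ≤ x := by
    rw [hB.1.spectrum_real_eq_range_eigenvalues] at hx
    obtain ⟨i, rfl⟩ := hx
    exact hB.eigenvalues_nonneg i
  simp [Function.comp_def, Real.sqrt_sq hx0]

lemma diag_re_nonneg {ι : Type*} [Fintype ι] [DecidableEq ι] {B : Matrix ι ι ℂ}
    (hB : B.PosSemidef) (v : ι) : 0 ≤ (B v v).re := by
  have h := hB.re_dotProduct_nonneg (Pi.single v 1)
  simpa [dotProduct, mulVec, Pi.single_apply] using h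

lemma sqrt_congr' {ι : Type*} [Fintype ι] [DecidableEq ι] {A B : Matrix ι ι ℂ}
    (hA : A.PosSemidef) (hB : B.PosSemidef) (h : A = B) : hA.sqrt = hB.sqrt := by
  subst h; rfl

lemma sqrt_split {ι : Type*} [Fintype ι] [DecidableEq ι] {A : Matrix ι ι ℂ}
    (hA : A.IsHermitian) :
    ((Matrix.posSemidef_conjTranspose_mul_self A).sqrt - A).PosSemidef ∧
    ((Matrix.posSemidef_conjTranspose_mul_self A).sqrt + A).PosSemidef := by
  classical
  set U : Matrix ι ι ℂ := (hA.eigenvectorUnitary : Matrix ι ι ℂ) with hU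
  have hUU : Uᴴ * U = 1 := by
    have := (Matrix.mem_unitaryGroup_iff').mp hA.eigenvectorUnitary.2
    simpa [Matrix.star_eq_conjTranspose] using this
  set ev := hA.eigenvalues with hev
  set m : (ℝ → ℝ) → Matrix ι ι ℂ :=
    fun g => U * Matrix.diagonal (fun i => ((g (ev i) : ℝ) : ℂ)) * Uᴴ with hm
  have hmul : ∀ g₁ g₂ : ℝ → ℝ, m g₁ * m g₂ = m (fun r => g₁ r * g₂ r) := by
    intro g₁ g₂
    simp only [hm]
    simp only [Matrix.mul_assoc]
    rw [← Matrix.mul_assoc Uᴴ U, hUU, Matrix.one_mul,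
      ← Matrix.mul_assoc (Matrix.diagonal _) (Matrix.diagonal _),
      Matrix.diagonal_mul_diagonal]
    congr 2
    funext i
    push_cast
    ring
  have hadd : ∀ g₁ g₂ : ℝ → ℝ, m g₁ + m g₂ = m (fun r => g₁ r + g₂ r) := by
    intro g₁ g₂
    simp only [hm]
    rw [← Matrix.add_mul, ← Matrix.mul_add, Matrix.diagonal_add]
    congr 2
    funext i
    push_cast
    ring
  have hpsd : ∀ g : ℝ → ℝ, (∀ r, 0 ≤ g r) → (m g).PosSemidef := by
    intro g hg
    refine (Matrix.PosSemidef.diagonal ?_).mul_mul_conjTranspose_same U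
    intro i
    exact Complex.zero_le_real.mpr (hg (ev i))
  have hAm : A = m id := by
    simpa [hm, Matrix.star_eq_conjTranspose, Function.comp_def] using hA.spectral_theorem
  have hneg : -A = m (fun r => -r) := by
    rw [hAm, hm]
    simp only [id]
    rw [← Matrix.neg_mul, ← Matrix.mul_neg, Matrix.diagonal_neg]
    congr 2
    funext i
    push_cast
    ring
  have hsq : (m (fun r => |r|)) ^ 2 = Aᴴ * A := by
    rw [pow_two, hmul]
    have h2 : Aᴴ * A = m id * m id := by rw [← hAm, hA.eq]
    rw [h2, hmul]
    rw [show (fun r : ℝ => |r| * |r|) = (fun r => id r * id r) from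
      funext fun r => by simp [abs_mul_abs_self]]
  have hsqrt : m (fun r => |r|) = (Matrix.posSemidef_conjTranspose_mul_self A).sqrt :=
    Matrix.PosSemidef.eq_sqrt_of_sq_eq (hpsd _ (fun r => abs_nonneg r)) _ hsq
  clear_value m U ev
  constructor
  · rw [sub_eq_add_neg, ← hsqrt, hneg, hadd]
    refine hpsd _ (fun r => ?_)
    have h1 := neg_abs_le r
    have h2 := le_abs_self r
    linarith
  · rw [← hsqrt, hAm, hadd]
    refine hpsd _ (fun r => ?_)
    simp only [id]
    have := neg_abs_le r
    linarith

lemma traceNorm_neg {ι : Type*} [Fintype ι] [DecidableEq ι] (A : Matrix ι ι ℂ) :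
    traceNorm (-A) = traceNorm A := by
  rw [traceNorm_eq, traceNorm_eq]
  congr 2
  exact sqrt_congr' _ _ (by simp)

lemma entry_re_le {ι : Type*} [Fintype ι] [DecidableEq ι] {A : Matrix ι ι ℂ}
    (hA : A.IsHermitian) (v : ι) :
    (A v v).re ≤ (traceNorm A + (A.trace).re) / 2 := by
  obtain ⟨h₁, h₂⟩ := sqrt_split hA
  set S := (Matrix.posSemidef_conjTranspose_mul_self A).sqrt with hSdef
  have hd1 : 0 ≤ ((S - A) v v).re := diag_re_nonneg h₁ v
  have hd2 : ((S + A) v v).re ≤ ((S + A).trace).re := by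
    rw [Matrix.trace, Complex.re_sum]
    exact Finset.single_le_sum (f := fun w => ((S + A).diag w).re)
      (fun w _ => diag_re_nonneg h₂ w) (Finset.mem_univ v)
  have htr : ((S + A).trace).re = traceNorm A + (A.trace).re := by
    rw [Matrix.trace_add, Complex.add_re]; rfl
  have e1 : ((S - A) v v).re = (S v v).re - (A v v).re := by simp [Matrix.sub_apply]
  have e2 : ((S + A) v v).re = (S v v).re + (A v v).re := by simp [Matrix.add_apply]
  rw [e1] at hd1
  rw [e2, htr] at hd2
  linarith

lemma tensPow_diagonal (d : Fin 2 → ℂ) (n : ℕ) :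
    tensPow (Matrix.diagonal d) n = Matrix.diagonal (fun x => ∏ i, d (x i)) := by
  ext x y
  by_cases h : x = y
  · subst h; simp [tensPow, Matrix.diagonal_apply_eq]
  · obtain ⟨i, hi⟩ := Function.ne_iff.mp h
    rw [Matrix.diagonal_apply_ne _ h]
    exact Finset.prod_eq_zero (Finset.mem_univ i) (Matrix.diagonal_apply_ne _ hi)

lemma sum_two_ite {ι : Type*} [Fintype ι] [DecidableEq ι] {a b : ι} (hab : a ≠ b) (c1 c2 : ℂ) :
    ∑ x, (if x = a then c1 else if x = b then c2 else 0) = c1 + c2 := by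
  have h : ∀ x : ι, (if x = a then c1 else if x = b then c2 else 0)
      = (if x = a then c1 else 0) + (if x = b then c2 else 0) := by
    intro x
    by_cases h1 : x = a
    · subst h1; simp [hab]
    · simp [h1]
  simp_rw [h, Finset.sum_add_distrib, Finset.sum_ite_eq', Finset.mem_univ, if_true]

lemma ket1_prod (n : ℕ) (x : Fin n → Fin 2) :
    (∏ i, (![(0:ℂ), 1]) (x i)) = if x = (fun _ => 1) then 1 else 0 := by
  by_cases hx : x = fun _ => 1
  · subst hx; simp
  · rw [if_neg hx]
    obtain ⟨i, hi⟩ := Function.ne_iff.mp hx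
    have h0 : x i = 0 := by omega
    exact Finset.prod_eq_zero (Finset.mem_univ i) (by rw [h0]; rfl)

lemma tensPow_ket1 (n : ℕ) :
    tensPow ket1 n = Matrix.diagonal (fun x => if x = (fun _ => 1) then (1:ℂ) else 0) := by
  rw [ket1, tensPow_diagonal]
  exact congrArg Matrix.diagonal (funext fun x => ket1_prod n x)

/-- the smoothed max-relative entropy value for `n` copies: the
optimal `λ` with `λ·π_M^{⊗n} ≥ ω` for some `ω` that is `ε`-close to
`|1⟩⟨1|^{⊗n}` equals `(1-ε)·Mⁿ`, and is attained. -/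
theorem stmt_15 (n : ℕ) (hn : 1 ≤ n) (ε : ℝ) (hε : ε ∈ Set.Ico (0:ℝ) (1/2))
    (M : ℝ) (hM : 2 ≤ M)
    (S : Set ℝ)
    (hS : S = {l : ℝ | 0 < l ∧ ∃ ω : Matrix (Fin n → Fin 2) (Fin n → Fin 2) ℂ,
      IsDensityMatrix ω ∧ traceDist ω (tensPow ket1 n) ≤ ε ∧
      (l • tensPow (piM M) n - ω).PosSemidef}) :
    sInf S = (1 - ε) * M ^ n ∧ (1 - ε) * M ^ n ∈ S := by
  obtain ⟨hε0, hε2⟩ := hε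
  have hM0 : (0:ℝ) < M := by linarith
  have hMn : (0:ℝ) < M ^ n := pow_pos hM0 n
  have hl0 : (0:ℝ) < (1 - ε) * M ^ n := by nlinarith
  set v1 : Fin n → Fin 2 := fun _ => 1 with hv1
  set v0 : Fin n → Fin 2 := fun _ => 0 with hv0
  have hne : v0 ≠ v1 := by
    intro h
    have := congrFun h ⟨0, by omega⟩
    simp [hv0, hv1] at this
  have hne' : v1 ≠ v0 := hne.symm
  -- the pi tensor diagonal
  set q : Fin 2 → ℝ := ![1 - 1/M, 1/M] with hq
  have hq0 : ∀ j, 0 ≤ q j := by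
    have h1 : (0:ℝ) ≤ 1 - 1/M := by
      rw [sub_nonneg, div_le_one hM0]; linarith
    have h2 : (0:ℝ) ≤ 1/M := by positivity
    intro j
    fin_cases j
    · simpa [hq] using h1
    · simpa [hq] using h2
  have hπ : tensPow (piM M) n
      = Matrix.diagonal (fun x => ((∏ i, q (x i) : ℝ) : ℂ)) := by
    rw [piM, tensPow_diagonal]
    refine congrArg Matrix.diagonal (funext fun x => ?_)
    rw [Complex.ofReal_prod]
    refine Finset.prod_congr rfl fun i _ => ?_
    have : ∀ j : Fin 2, (![((1 - 1/M : ℝ) : ℂ), ((1/M : ℝ) : ℂ)]) j = ((q j : ℝ) : ℂ) := by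
      intro j; fin_cases j <;> simp [hq]
    exact this (x i)
  have hprod1 : (∏ i : Fin n, q (v1 i)) = (1/M) ^ n := by
    simp [hv1, hq, Finset.prod_const]
  have hprod0 : (∏ i : Fin n, q (v0 i)) = (1 - 1/M) ^ n := by
    simp [hv0, hq, Finset.prod_const]
  -- the omega we construct
  set f : (Fin n → Fin 2) → ℂ :=
    fun x => if x = v1 then ((1 - ε : ℝ) : ℂ) else if x = v0 then ((ε : ℝ) : ℂ) else 0 with hf
  set ω : Matrix (Fin n → Fin 2) (Fin n → Fin 2) ℂ := Matrix.diagonal f with hω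
  have hρ := tensPow_ket1 n
  set f1 : (Fin n → Fin 2) → ℂ := fun x => if x = v1 then (1:ℂ) else 0 with hf1
  have hρ' : tensPow ket1 n = Matrix.diagonal f1 := hρ
  -- key membership claim
  have hmem : (1 - ε) * M ^ n ∈ S := by
    rw [hS]
    refine ⟨hl0, ω, ⟨⟨?_, ?_⟩, ?_, ?_⟩⟩
    · -- PSD
      refine Matrix.PosSemidef.diagonal (fun x => ?_)
      simp only [hf]
      split_ifs <;> first
        | exact Complex.zero_le_real.mpr (by linarith)
        | exact le_refl 0
    · -- trace
      rw [hω, Matrix.trace_diagonal]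
      rw [hf]
      rw [sum_two_ite hne' _ _]
      push_cast
      ring
    · -- trace distance
      have hsub : ω - tensPow ket1 n
          = Matrix.diagonal (fun x => f x - f1 x) := by
        rw [hω, hρ']
        ext i j
        by_cases h : i = j
        · subst h; simp [Matrix.diagonal_apply_eq, Matrix.sub_apply]
        · simp [Matrix.diagonal_apply_ne _ h, Matrix.sub_apply]
      set s : (Fin n → Fin 2) → ℂ :=
        fun x => if x = v1 then ((ε:ℝ):ℂ) else if x = v0 then ((ε:ℝ):ℂ) else 0 with hs
      have hspsd : (Matrix.diagonal s).PosSemidef := by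
        refine Matrix.PosSemidef.diagonal (fun x => ?_)
        simp only [hs]
        split_ifs <;> first
          | exact Complex.zero_le_real.mpr (by linarith)
          | exact le_refl 0
      have hsqeq : (Matrix.diagonal s) ^ 2
          = (ω - tensPow ket1 n)ᴴ * (ω - tensPow ket1 n) := by
        rw [hsub, pow_two, Matrix.diagonal_conjTranspose, Matrix.diagonal_mul_diagonal,
          Matrix.diagonal_mul_diagonal]
        refine congrArg Matrix.diagonal (funext fun x => ?_)
        simp only [hs, hf, hf1, Pi.star_apply]
        split_ifs with h1 h0
        · have e : ((1 - ε : ℝ) : ℂ) - 1 = ((-ε : ℝ) : ℂ) := by push_cast; ring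
          rw [e, Complex.star_def, Complex.conj_ofReal]
          push_cast; ring
        · rw [sub_zero, Complex.star_def, Complex.conj_ofReal]
        · simp
      have hsqrt : Matrix.diagonal s
          = (Matrix.posSemidef_conjTranspose_mul_self (ω - tensPow ket1 n)).sqrt :=
        Matrix.PosSemidef.eq_sqrt_of_sq_eq hspsd _ hsqeq
      have : traceDist ω (tensPow ket1 n) = ε := by
        rw [traceDist, traceNorm_eq, ← hsqrt, Matrix.trace_diagonal, hs,
          sum_two_ite hne' _ _]
        push_cast
        simp
      rw [this]
    · -- PSD of l π - ω
      rw [hπ, hω]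
      have hdiag : ((1 - ε) * M ^ n) • Matrix.diagonal (fun x => ((∏ i, q (x i) : ℝ) : ℂ))
          - Matrix.diagonal f
          = Matrix.diagonal (fun x =>
              ((((1 - ε) * M ^ n) * ∏ i, q (x i) : ℝ) : ℂ) - f x) := by
        ext i j
        by_cases h : i = j
        · subst h
          simp [Matrix.diagonal_apply_eq, Matrix.sub_apply, Matrix.smul_apply,
            Complex.real_smul]
          try push_cast
          try ring
        · simp [Matrix.diagonal_apply_ne _ h, Matrix.sub_apply, Matrix.smul_apply]
      rw [hdiag]
      refine Matrix.PosSemidef.diagonal (fun x => ?_)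
      simp only [Pi.zero_apply, hf]
      by_cases h1 : x = v1
      · subst h1
        rw [if_pos rfl]
        have : (((1 - ε) * M ^ n * ∏ i, q (v1 i) : ℝ) : ℂ) - ((1 - ε : ℝ) : ℂ)
            = (((1 - ε) * M ^ n * ∏ i, q (v1 i) - (1 - ε) : ℝ) : ℂ) := by push_cast; ring
        rw [this, Complex.zero_le_real, hprod1]
        have hMM : M ^ n * (1/M) ^ n = 1 := by
          rw [← mul_pow]
          rw [mul_one_div, div_self (ne_of_gt hM0), one_pow]
        nlinarith [hMM]
      · rw [if_neg h1]
        by_cases h0 : x = v0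
        · subst h0
          rw [if_pos rfl]
          have : (((1 - ε) * M ^ n * ∏ i, q (v0 i) : ℝ) : ℂ) - ((ε : ℝ) : ℂ)
              = (((1 - ε) * M ^ n * ∏ i, q (v0 i) - ε : ℝ) : ℂ) := by push_cast; ring
          rw [this, Complex.zero_le_real, hprod0]
          have hMM : M ^ n * (1 - 1/M) ^ n = (M - 1) ^ n := by
            rw [← mul_pow]
            congr 1
            field_simp
          have h1 : (1:ℝ) ≤ (M - 1) ^ n := one_le_pow₀ (by linarith)
          nlinarith [hMM, h1]
        · rw [if_neg h0, sub_zero]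
          rw [Complex.zero_le_real]
          have := Finset.prod_nonneg (fun i (_ : i ∈ Finset.univ) => hq0 (x i))
          nlinarith
  -- lower bound
  have hlb : ∀ l ∈ S, (1 - ε) * M ^ n ≤ l := by
    intro l hl
    rw [hS] at hl
    obtain ⟨hlpos, ω', ⟨hωpsd, hωtr⟩, hdist, hpsd⟩ := hl
    -- entry of PSD at v1
    have hv : 0 ≤ ((l • tensPow (piM M) n - ω') v1 v1).re := diag_re_nonneg hpsd v1
    have hπv : (tensPow (piM M) n) v1 v1 = (((1/M) ^ n : ℝ) : ℂ) := by
      rw [hπ, Matrix.diagonal_apply_eq, hprod1]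
    have hentry : ((l • tensPow (piM M) n - ω') v1 v1).re
        = l * (1/M) ^ n - (ω' v1 v1).re := by
      rw [Matrix.sub_apply, Matrix.smul_apply, hπv, Complex.real_smul,
        ← Complex.ofReal_mul, Complex.sub_re, Complex.ofReal_re]
    rw [hentry] at hv
    -- ω' v1 v1 ≥ 1 - ε
    have hρher : (tensPow ket1 n).IsHermitian := by
      rw [hρ']
      rw [Matrix.isHermitian_diagonal_iff]
      intro x
      simp only [hf1]
      split_ifs
      · exact IsSelfAdjoint.one ℂ
      · exact IsSelfAdjoint.zero ℂ
    have hA : (tensPow ket1 n - ω').IsHermitian := hρher.sub hωpsd.isHermitian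
    have hρtr : (tensPow ket1 n).trace = 1 := by
      rw [hρ', Matrix.trace_diagonal]
      simp [hf1]
    have htr0 : ((tensPow ket1 n - ω').trace).re = 0 := by
      rw [Matrix.trace_sub, hρtr, hωtr]
      simp
    have hTN : traceNorm (tensPow ket1 n - ω') ≤ 2 * ε := by
      have : tensPow ket1 n - ω' = -(ω' - tensPow ket1 n) := (neg_sub _ _).symm
      rw [this, traceNorm_neg]
      have := hdist
      rw [traceDist] at this
      linarith
    have hkey := entry_re_le hA v1
    have hρv : (tensPow ket1 n) v1 v1 = 1 := by
      rw [hρ', Matrix.diagonal_apply_eq]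
      simp [hf1]
    have hAv : ((tensPow ket1 n - ω') v1 v1).re = 1 - (ω' v1 v1).re := by
      rw [Matrix.sub_apply, hρv, Complex.sub_re]
      simp
    rw [hAv, htr0] at hkey
    have hω1 : 1 - ε ≤ (ω' v1 v1).re := by linarith
    -- combine
    have : (1 - ε) ≤ l * (1/M) ^ n := by linarith
    rw [one_div, inv_pow, ← division_def] at this
    exact (le_div_iff₀ hMn).mp this
  refine ⟨le_antisymm ?_ ?_, hmem⟩
  · exact csInf_le ⟨(1 - ε) * M ^ n, fun x hx => hlb x hx⟩ hmem
  · exact le_csInf ⟨_, hmem⟩ hlb
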